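/- arXiv:1403.0154 — 3 statements merged into one kernel-verified Lean document; each statement's English description precedes it below -/
import Mathlib

section
/- Let n be a positive real number, S_y a positive real number, and λ40, λ04, λ22 real numbers with λ04 > 1. Then the MSE of the ratio estimator, MSE(t₁) = (S_y⁴/n)·((λ40 − 1) + (λ04 − 1) − 2(λ22 − 1)), dominates the minimum variance of the difference estimator, minV(t₂) = (S_y⁴/n)·((λ40 − 1) − (λ22 − 1)²/(λ04 − 1)); more precisely, MSE(t₁) − minV(t₂) = (S_y⁴/(n(λ04 − 1)))·(λ04 − λ22)² ≥ 0, with equality if and only if λ22 = λ04. -/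
theorem stmt_3 (n Sy lam40 lam04 lam22 : ℝ)
    (hn : 0 < n) (hSy : 0 < Sy) (hlam : 1 < lam04) :
    (Sy ^ 4 / n) * ((lam40 - 1) + (lam04 - 1) - 2 * (lam22 - 1))
      - (Sy ^ 4 / n) * ((lam40 - 1) - (lam22 - 1) ^ 2 / (lam04 - 1))
      = (Sy ^ 4 / (n * (lam04 - 1))) * (lam04 - lam22) ^ 2 ∧
    0 ≤ (Sy ^ 4 / (n * (lam04 - 1))) * (lam04 - lam22) ^ 2 ∧
    ((Sy ^ 4 / (n * (lam04 - 1))) * (lam04 - lam22) ^ 2 = 0 ↔ lam22 = lam04) := by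
  have h1 : lam04 - 1 ≠ 0 := by linarith
  have h2 : 0 < lam04 - 1 := by linarith
  have hpos : 0 < Sy ^ 4 / (n * (lam04 - 1)) := by positivity
  refine ⟨by field_simp; ring, by positivity, ?_⟩
  constructor
  · intro h
    have := (mul_eq_zero.mp h).resolve_left (ne_of_gt hpos)
    have := pow_eq_zero_iff (n := 2) (by norm_num) |>.mp this
    linarith
  · intro h; rw [h]; ring
end

section
/- Let n be a positive real number, S_y a positive real number, and λ40, λ04, λ22 real numbers with λ04 > 1. Then the MSE of the exponential ratio estimator, MSE(t₃) = (S_y⁴/n)·((λ40 − 1) + (λ04 − 1)/4 − (λ22 − 1)), dominates the minimum variance of the difference estimator, minV(t₂) = (S_y⁴/n)·((λ40 − 1) − (λ22 − 1)²/(λ04 − 1)); more precisely, MSE(t₃) − minV(t₂) = (S_y⁴/(4n(λ04 − 1)))·((λ04 − 1) − 2(λ22 − 1))² ≥ 0, with equality if and only if λ04 − 1 = 2(λ22 − 1). -/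
theorem stmt_4 (n Sy lam40 lam04 lam22 : ℝ)
    (hn : 0 < n) (hSy : 0 < Sy) (hlam : 1 < lam04) :
    (Sy ^ 4 / n) * ((lam40 - 1) + (lam04 - 1) / 4 - (lam22 - 1))
      - (Sy ^ 4 / n) * ((lam40 - 1) - (lam22 - 1) ^ 2 / (lam04 - 1))
      = (Sy ^ 4 / (4 * n * (lam04 - 1))) * ((lam04 - 1) - 2 * (lam22 - 1)) ^ 2 ∧
    0 ≤ (Sy ^ 4 / (4 * n * (lam04 - 1))) * ((lam04 - 1) - 2 * (lam22 - 1)) ^ 2 ∧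
    ((Sy ^ 4 / (4 * n * (lam04 - 1))) * ((lam04 - 1) - 2 * (lam22 - 1)) ^ 2 = 0
      ↔ lam04 - 1 = 2 * (lam22 - 1)) := by
  have h1 : lam04 - 1 ≠ 0 := by linarith
  have hpos : 0 < Sy ^ 4 / (4 * n * (lam04 - 1)) := div_pos (by positivity) (by nlinarith)
  refine ⟨by field_simp; ring, by positivity, ?_⟩
  constructor
  · intro h
    rcases mul_eq_zero.1 h with h | h
    · exact absurd h hpos.ne'
    · have := pow_eq_zero_iff (n := 2) (by norm_num) |>.1 h
      linarith
  · intro h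
    rw [show (lam04 - 1) - 2 * (lam22 - 1) = 0 by linarith]
    ring
end

section
/- Let n be a positive real number, S_y, S_φ, A₁, b real numbers with S_y, S_φ > 0, and λ40, λ04, λ22 real numbers with λ04 > 1. Then the first-order MSE of the family t_s, namely M = (1/n)·(S_y⁴·(λ40 − 1) + (λ04 − 1)·(b²·S_φ⁴ + A₁²·S_y⁴ + 2·A₁·b·S_y²·S_φ²) − 2·S_y²·(λ22 − 1)·(b·S_φ² + A₁·S_y²)), satisfies M ≥ (S_y⁴/n)·((λ40 − 1) − (λ22 − 1)²/(λ04 − 1)); that is, every member of the family t_s (for any choice of b and A₁) has first-order MSE at least the minimum variance of the difference estimator t₂. -/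
theorem stmt_14 (n Sy Sφ A₁ b lam40 lam04 lam22 : ℝ)
    (hn : 0 < n) (hSy : 0 < Sy) (hSφ : 0 < Sφ) (hlam : 1 < lam04) :
    (Sy ^ 4 / n) * ((lam40 - 1) - (lam22 - 1) ^ 2 / (lam04 - 1))
      ≤ (1 / n) * (Sy ^ 4 * (lam40 - 1)
        + (lam04 - 1) * (b ^ 2 * Sφ ^ 4 + A₁ ^ 2 * Sy ^ 4 + 2 * A₁ * b * Sy ^ 2 * Sφ ^ 2)
        - 2 * Sy ^ 2 * (lam22 - 1) * (b * Sφ ^ 2 + A₁ * Sy ^ 2)) := by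
  have hL : (0:ℝ) < lam04 - 1 := by linarith
  have expand :
      (1 / n) * (Sy ^ 4 * (lam40 - 1)
        + (lam04 - 1) * (b ^ 2 * Sφ ^ 4 + A₁ ^ 2 * Sy ^ 4 + 2 * A₁ * b * Sy ^ 2 * Sφ ^ 2)
        - 2 * Sy ^ 2 * (lam22 - 1) * (b * Sφ ^ 2 + A₁ * Sy ^ 2))
      - (Sy ^ 4 / n) * ((lam40 - 1) - (lam22 - 1) ^ 2 / (lam04 - 1))
      = (1 / n) * ((lam04 - 1)
          * ((b * Sφ ^ 2 + A₁ * Sy ^ 2) - Sy ^ 2 * (lam22 - 1) / (lam04 - 1)) ^ 2) := by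
    field_simp
    ring
  have hnonneg : 0 ≤ (1 / n) * ((lam04 - 1)
      * ((b * Sφ ^ 2 + A₁ * Sy ^ 2) - Sy ^ 2 * (lam22 - 1) / (lam04 - 1)) ^ 2) :=
    mul_nonneg (by positivity) (mul_nonneg hL.le (sq_nonneg _))
  linarith [expand, hnonneg]
end
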